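/- Let R be a commutative ring whose nilradical N(R) is nilpotent. Every element g of the group ℙ(R) (products of an element of 1 + t^{-1}·N(R((u)))[t^{-1}]-type and u^{-1}-type tails) decomposes uniquely as a convergent infinite product g = ∏_{(i,j) ≤ (0,−1), i > n, j > m} (1 − c_{i,j} u^j t^i) with all c_{i,j} ∈ N(R), for appropriate bounds n < 0, m. -/

import Mathlib

namespace CC

variable {R : Type*} [CommRing R]

/-- `x ∈ W_{m,{mᵢ}} = t^m R((u))[[t]] + ∑ᵢ u^{mᵢ} tⁱ R[[u]]`, a basic open subgroup of
`R((u))((t))`. -/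
def MemW (m : ℤ) (mi : ℤ → ℤ) (x : LaurentSeries (LaurentSeries R)) : Prop :=
  ∀ s : ℤ, s < m → ∀ w : ℤ, w < mi s → (x.coeff s).coeff w = 0

/-- `g ∈ ℙ(R) = 1 + 𝔭(R)`: `g − 1` is supported in bidegrees `(i,j) ≤ (0,−1)`
(lexicographically) and has all coefficients nilpotent. -/
def InPGroup (g : LaurentSeries (LaurentSeries R)) : Prop :=
  (∀ s : ℤ, 0 < s → (g - 1).coeff s = 0) ∧
  (∀ w : ℤ, 0 ≤ w → ((g - 1).coeff 0).coeff w = 0) ∧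
  (∀ s w : ℤ, IsNilpotent (((g - 1).coeff s).coeff w))

/-- the generic term in the expansion of the finite product. -/
noncomputable def tm (c : ℤ × ℤ → R) (s w : ℤ) (T : Finset (ℤ × ℤ)) : R :=
  if (∑ p ∈ T, p.1) = s ∧ (∑ p ∈ T, p.2) = w then (-1 : R) ^ T.card * ∏ p ∈ T, c p else 0

/-- coefficient of the finite partial product. -/
noncomputable def Co (c : ℤ × ℤ → R) (S : Finset (ℤ × ℤ)) (s w : ℤ) : R :=
  ∑ T ∈ S.powerset, tm c s w T

lemma coeff_single_mul (x : LaurentSeries (LaurentSeries R)) (a : ℤ × ℤ) (r : R) (s w : ℤ) :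
    (((HahnSeries.single a.1 (HahnSeries.single a.2 r) : LaurentSeries (LaurentSeries R)) * x).coeff s).coeff w
      = r * ((x.coeff (s - a.1)).coeff (w - a.2)) := by
  have h1 : s = (s - a.1) + a.1 := by ring
  rw [h1, HahnSeries.coeff_single_mul_add]
  have h2 : w = (w - a.2) + a.2 := by ring
  rw [h2, HahnSeries.coeff_single_mul_add]
  simp

lemma coeff_prod (c : ℤ × ℤ → R) (S : Finset (ℤ × ℤ)) (s w : ℤ) :
    (((∏ p ∈ S, ((1 : LaurentSeries (LaurentSeries R)) -
        HahnSeries.single p.1 (HahnSeries.single p.2 (c p)))).coeff s).coeff w)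
      = Co c S s w := by
  induction S using Finset.induction_on generalizing s w with
  | empty =>
      simp only [Finset.prod_empty, Finset.powerset_empty, Co, Finset.sum_singleton, tm]
      by_cases hs : s = 0
      · subst hs
        simp only [HahnSeries.coeff_one, if_pos rfl]
        by_cases hw : w = 0
        · subst hw; simp
        · simp [HahnSeries.coeff_one, hw, Ne.symm hw]
      · simp [HahnSeries.coeff_one, hs, Ne.symm hs, HahnSeries.coeff_zero]
  | @insert a S ha ih =>
      rw [Finset.prod_insert ha]
      have hsplit : ((1 : LaurentSeries (LaurentSeries R)) -
            HahnSeries.single a.1 (HahnSeries.single a.2 (c a))) *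
            (∏ p ∈ S, ((1 : LaurentSeries (LaurentSeries R)) -
              HahnSeries.single p.1 (HahnSeries.single p.2 (c p))))
          = (∏ p ∈ S, ((1 : LaurentSeries (LaurentSeries R)) -
              HahnSeries.single p.1 (HahnSeries.single p.2 (c p))))
            - HahnSeries.single a.1 (HahnSeries.single a.2 (c a)) *
              (∏ p ∈ S, ((1 : LaurentSeries (LaurentSeries R)) -
                HahnSeries.single p.1 (HahnSeries.single p.2 (c p)))) := by ring
      rw [hsplit, HahnSeries.coeff_sub, HahnSeries.coeff_sub, coeff_single_mul, ih, ih]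
      unfold Co
      rw [Finset.sum_powerset_insert ha]
      have key : ∀ T ∈ S.powerset, tm c s w (insert a T)
          = -(c a * tm c (s - a.1) (w - a.2) T) := by
        intro T hT
        have haT : a ∉ T := fun h => ha (Finset.mem_powerset.1 hT h)
        unfold tm
        rw [Finset.sum_insert haT, Finset.sum_insert haT, Finset.card_insert_of_notMem haT,
          Finset.prod_insert haT]
        by_cases hc : (∑ p ∈ T, p.1) = s - a.1 ∧ (∑ p ∈ T, p.2) = w - a.2
        · have hc1 : a.1 + ∑ p ∈ T, p.1 = s := by omega
          have hc2 : a.2 + ∑ p ∈ T, p.2 = w := by omega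
          rw [if_pos ⟨hc1, hc2⟩, if_pos hc]
          ring
        · have hc' : ¬(a.1 + ∑ p ∈ T, p.1 = s ∧ a.2 + ∑ p ∈ T, p.2 = w) := by
            intro h; exact hc ⟨by omega, by omega⟩
          rw [if_neg hc', if_neg hc]
          ring
      rw [Finset.sum_congr rfl key]
      rw [Finset.sum_neg_distrib, ← Finset.mul_sum]
      ring


lemma prod_mem_pow (I : Ideal R) (T : Finset (ℤ × ℤ)) (f : ℤ × ℤ → R)
    (h : ∀ x ∈ T, f x ∈ I) : ∏ x ∈ T, f x ∈ I ^ T.card := by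
  induction T using Finset.induction_on with
  | empty => simp
  | @insert a T ha ih =>
      rw [Finset.prod_insert ha, Finset.card_insert_of_notMem ha, pow_succ, mul_comm (I ^ T.card) I]
      exact Ideal.mul_mem_mul (h a (Finset.mem_insert_self a T))
        (ih fun x hx => h x (Finset.mem_insert_of_mem hx))

lemma prod_sub_prod_mem (I J : Ideal R) (T : Finset (ℤ × ℤ)) (f g : ℤ × ℤ → R)
    (hf : ∀ x ∈ T, f x ∈ I) (hg : ∀ x ∈ T, g x ∈ I) (hfg : ∀ x ∈ T, f x - g x ∈ J) :
    (∏ x ∈ T, f x) - (∏ x ∈ T, g x) ∈ I ^ (T.card - 1) * J := by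
  induction T using Finset.induction_on with
  | empty => simp
  | @insert a T ha ih =>
      rw [Finset.prod_insert ha, Finset.prod_insert ha, Finset.card_insert_of_notMem ha]
      have hdec : f a * ∏ x ∈ T, f x - g a * ∏ x ∈ T, g x
          = f a * ((∏ x ∈ T, f x) - (∏ x ∈ T, g x)) + (f a - g a) * ∏ x ∈ T, g x := by ring
      rw [hdec]
      have hm : T.card + 1 - 1 = T.card := by omega
      rw [hm]
      apply Submodule.add_mem
      · rcases Finset.eq_empty_or_nonempty T with hT | hT
        · subst hT; simp
        · have hc : T.card = (T.card - 1) + 1 := by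
            have := Finset.card_pos.mpr hT; omega
          have h1 : f a * ((∏ x ∈ T, f x) - (∏ x ∈ T, g x)) ∈ I * (I ^ (T.card - 1) * J) :=
            Ideal.mul_mem_mul (hf a (Finset.mem_insert_self a T))
              (ih (fun x hx => hf x (Finset.mem_insert_of_mem hx))
                  (fun x hx => hg x (Finset.mem_insert_of_mem hx))
                  (fun x hx => hfg x (Finset.mem_insert_of_mem hx)))
          have h2 : I * (I ^ (T.card - 1) * J) = I ^ T.card * J := by
            rw [← mul_assoc, ← pow_succ', ← hc]
          rwa [h2] at h1
      · have h1 : (f a - g a) * ∏ x ∈ T, g x ∈ J * I ^ T.card :=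
          Ideal.mul_mem_mul (hfg a (Finset.mem_insert_self a T))
            (prod_mem_pow I T g (fun x hx => hg x (Finset.mem_insert_of_mem hx)))
        rwa [mul_comm (J) (I ^ T.card)] at h1

lemma prod_eq_zero_of_card_ge {q : ℕ} (hq : nilradical R ^ q = ⊥)
    (T : Finset (ℤ × ℤ)) (f : ℤ × ℤ → R) (h : ∀ x ∈ T, f x ∈ nilradical R)
    (hcard : q ≤ T.card) : ∏ x ∈ T, f x = 0 := by
  have h1 : ∏ x ∈ T, f x ∈ nilradical R ^ T.card := prod_mem_pow _ T f h
  have h2 : nilradical R ^ T.card ≤ nilradical R ^ q := Ideal.pow_le_pow_right hcard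
  have := h2 h1
  rwa [hq, Ideal.mem_bot] at this

lemma sub_mem_pow_succ {q k : ℕ} (hq : nilradical R ^ q = ⊥)
    (T : Finset (ℤ × ℤ)) (f g : ℤ × ℤ → R) (hf : ∀ x ∈ T, f x ∈ nilradical R)
    (hg : ∀ x ∈ T, g x ∈ nilradical R) (hfg : ∀ x ∈ T, f x - g x ∈ nilradical R ^ k)
    (hcard : 2 ≤ T.card) :
    (∏ x ∈ T, f x) - (∏ x ∈ T, g x) ∈ nilradical R ^ (k + 1) := by
  have h1 := prod_sub_prod_mem (nilradical R) (nilradical R ^ k) T f g hf hg hfg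
  have h2 : nilradical R ^ (T.card - 1) * nilradical R ^ k = nilradical R ^ (T.card - 1 + k) :=
    (pow_add _ _ _).symm
  rw [h2] at h1
  exact Ideal.pow_le_pow_right (by omega) h1


/-- the support cone: `n < i ≤ 0`, `m < j`, `(i,j) <lex (0,0)`. -/
def G (n m : ℤ) : Set (ℤ × ℤ) :=
  {p | n < p.1 ∧ p.1 ≤ 0 ∧ m < p.2 ∧ (p.1 < 0 ∨ (p.1 = 0 ∧ p.2 ≤ -1))}

/-- `p` is a sum of at most `k` (and at least one) elements of `G n m`. -/
def DD (n m : ℤ) (k : ℕ) (p : ℤ × ℤ) : Prop :=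
  ∃ M : Multiset (ℤ × ℤ), (∀ x ∈ M, x ∈ G n m) ∧ M ≠ 0 ∧ M.card ≤ k ∧ M.sum = p

lemma DD.mono {n m : ℤ} {k k' : ℕ} (h : k ≤ k') {p : ℤ × ℤ} (hp : DD n m k p) :
    DD n m k' p := by
  obtain ⟨M, h1, h2, h3, h4⟩ := hp
  exact ⟨M, h1, h2, le_trans h3 h, h4⟩

lemma DD.add {n m : ℤ} {k k' : ℕ} {p p' : ℤ × ℤ} (hp : DD n m k p) (hp' : DD n m k' p') :
    DD n m (k + k') (p + p') := by
  obtain ⟨M, h1, h2, h3, h4⟩ := hp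
  obtain ⟨M', h1', h2', h3', h4'⟩ := hp'
  refine ⟨M + M', ?_, ?_, ?_, ?_⟩
  · intro x hx; rcases Multiset.mem_add.1 hx with h | h
    · exact h1 x h
    · exact h1' x h
  · intro hz
    have := congrArg Multiset.card hz
    rw [Multiset.card_add] at this
    simp only [Multiset.card_zero] at this
    exact h2 (Multiset.card_eq_zero.1 (by omega))
  · rw [Multiset.card_add]; omega
  · rw [Multiset.sum_add, h4, h4']

lemma multiset_sum_fst_bounds (n : ℤ) (hn : n + 1 ≤ 0) (M : Multiset (ℤ × ℤ))
    (h : ∀ x ∈ M, n + 1 ≤ x.1 ∧ x.1 ≤ 0) :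
    (M.card : ℤ) * (n + 1) ≤ M.sum.1 ∧ M.sum.1 ≤ 0 := by
  induction M using Multiset.induction_on with
  | empty => simp
  | @cons a M ih =>
      have ha := h a (Multiset.mem_cons_self a M)
      have ihm := ih fun x hx => h x (Multiset.mem_cons_of_mem hx)
      rw [Multiset.sum_cons, Multiset.card_cons]
      have : (a + M.sum).1 = a.1 + M.sum.1 := rfl
      rw [this]
      push_cast
      constructor <;> nlinarith [ihm.1, ihm.2, ha.1, ha.2]

lemma multiset_sum_snd_bounds (m : ℤ) (M : Multiset (ℤ × ℤ))
    (h : ∀ x ∈ M, m + 1 ≤ x.2) :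
    (M.card : ℤ) * (m + 1) ≤ M.sum.2 := by
  induction M using Multiset.induction_on with
  | empty => simp
  | @cons a M ih =>
      have ha := h a (Multiset.mem_cons_self a M)
      have ihm := ih fun x hx => h x (Multiset.mem_cons_of_mem hx)
      rw [Multiset.sum_cons, Multiset.card_cons]
      have : (a + M.sum).2 = a.2 + M.sum.2 := rfl
      rw [this]
      push_cast
      nlinarith

lemma Lx_add {p p' : ℤ × ℤ} (h : p.1 < 0 ∨ (p.1 = 0 ∧ p.2 ≤ -1))
    (h' : p'.1 < 0 ∨ (p'.1 = 0 ∧ p'.2 ≤ -1)) :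
    (p + p').1 < 0 ∨ ((p + p').1 = 0 ∧ (p + p').2 ≤ -1) := by
  have h1 : (p + p').1 = p.1 + p'.1 := rfl
  have h2 : (p + p').2 = p.2 + p'.2 := rfl
  rw [h1, h2]; omega

lemma multiset_sum_lx (M : Multiset (ℤ × ℤ)) (hM : M ≠ 0)
    (h : ∀ x ∈ M, x.1 < 0 ∨ (x.1 = 0 ∧ x.2 ≤ -1)) :
    M.sum.1 < 0 ∨ (M.sum.1 = 0 ∧ M.sum.2 ≤ -1) := by
  induction M using Multiset.induction_on with
  | empty => exact absurd rfl hM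
  | @cons a M ih =>
      rw [Multiset.sum_cons]
      rcases eq_or_ne M 0 with h0 | h0
      · subst h0; simpa using h a (by simp)
      · exact Lx_add (h a (by simp))
          (ih h0 fun x hx => h x (Multiset.mem_cons_of_mem hx))

/-- basic consequence: a `DD n m k` point lies in the region `G ((k)*(n+1)-1) ((k)*(m+1)-1)`
provided `n, m ≤ -1`. -/
lemma DD.mem_G {n m : ℤ} (hn : n ≤ -1) (hm : m ≤ -1) {k : ℕ} {p : ℤ × ℤ}
    (hp : DD n m k p) : p ∈ G ((k : ℤ) * (n + 1) - 1) ((k : ℤ) * (m + 1) - 1) := by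
  obtain ⟨M, h1, h2, h3, h4⟩ := hp
  have hfst := multiset_sum_fst_bounds n (by omega) M
    (fun x hx => ⟨(h1 x hx).1, (h1 x hx).2.1⟩)
  have hsnd := multiset_sum_snd_bounds m M (fun x hx => (h1 x hx).2.2.1)
  have hlx := multiset_sum_lx M h2 (fun x hx => (h1 x hx).2.2.2)
  have hcard : (M.card : ℤ) ≤ (k : ℤ) := by exact_mod_cast h3
  have hb1 : (k : ℤ) * (n + 1) ≤ (M.card : ℤ) * (n + 1) := by nlinarith
  have hb2 : (k : ℤ) * (m + 1) ≤ (M.card : ℤ) * (m + 1) := by nlinarith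
  rw [h4] at hfst hsnd hlx
  exact ⟨by omega, hfst.2, by omega, hlx⟩

lemma finset_sum_DD {n m : ℤ} (T : Finset (ℤ × ℤ)) (hT : T.Nonempty) (d : ℤ × ℤ → ℕ)
    (h : ∀ x ∈ T, DD n m (d x) x) :
    DD n m (∑ x ∈ T, d x) (∑ x ∈ T, x) := by
  induction T using Finset.induction_on with
  | empty => exact absurd hT (by simp)
  | @insert a T ha ih =>
      rw [Finset.sum_insert ha, Finset.sum_insert ha]
      rcases Finset.eq_empty_or_nonempty T with h0 | h0
      · subst h0; simpa using h a (by simp)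
      · exact DD.add (h a (by simp))
          (ih h0 fun x hx => h x (Finset.mem_insert_of_mem hx))


def Bd (q : ℕ) (m' w : ℤ) : ℤ := w - ((q : ℤ) - 1) * (m' + 1)

noncomputable def BoxF (q : ℕ) (n' m' w : ℤ) : Finset (ℤ × ℤ) :=
  Finset.Ioc n' 0 ×ˢ Finset.Ioc m' (Bd q m' w)

lemma mem_BoxF {q : ℕ} {n' m' w : ℤ} {p : ℤ × ℤ} :
    p ∈ BoxF q n' m' w ↔ (n' < p.1 ∧ p.1 ≤ 0) ∧ (m' < p.2 ∧ p.2 ≤ Bd q m' w) := by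
  simp [BoxF, Finset.mem_product, Finset.mem_Ioc]

lemma prod_mem_pow_sum (I : Ideal R) (T : Finset (ℤ × ℤ)) (f : ℤ × ℤ → R) (d : ℤ × ℤ → ℕ)
    (h : ∀ x ∈ T, f x ∈ I ^ d x) : ∏ x ∈ T, f x ∈ I ^ (∑ x ∈ T, d x) := by
  induction T using Finset.induction_on with
  | empty => simp [Ideal.one_eq_top]
  | @insert a T ha ih =>
      rw [Finset.prod_insert ha, Finset.sum_insert ha, pow_add]
      exact Ideal.mul_mem_mul (h a (by simp))
        (ih fun x hx => h x (Finset.mem_insert_of_mem hx))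

/-- terms indexed by sets not inside the box vanish. -/
lemma tm_eq_zero {q : ℕ} (hq : nilradical R ^ q = ⊥) (h2 : 2 ≤ q) {n' m' : ℤ}
    (hm' : m' ≤ -1) {c : ℤ × ℤ → R}
    (hsupp : ∀ p, c p ≠ 0 → n' < p.1 ∧ p.1 ≤ 0 ∧ m' < p.2)
    (hnil : ∀ p, c p ∈ nilradical R) {s w : ℤ} {T : Finset (ℤ × ℤ)}
    (hT : ¬ T ⊆ BoxF q n' m' w) : tm c s w T = 0 := by
  unfold tm
  split
  case isFalse => rfl
  case isTrue hcond =>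
    by_cases hz : ∃ x ∈ T, c x = 0
    · obtain ⟨x, hx, hcx⟩ := hz
      rw [Finset.prod_eq_zero hx hcx, mul_zero]
    · push_neg at hz
      by_cases hcard : q ≤ T.card
      · rw [prod_eq_zero_of_card_ge hq T c (fun x _ => hnil x) hcard, mul_zero]
      · exfalso
        apply hT
        intro p hp
        have hps := hsupp p (hz p hp)
        rw [mem_BoxF]
        refine ⟨⟨hps.1, hps.2.1⟩, hps.2.2, ?_⟩
        -- p.2 ≤ Bd q m' w
        have hsum : (∑ x ∈ T.erase p, x.2) + p.2 = w := by
          rw [Finset.sum_erase_add T _ hp]; exact hcond.2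
        have hlb : ((T.erase p).card : ℤ) * (m' + 1) ≤ ∑ x ∈ T.erase p, x.2 := by
          have h := Finset.card_nsmul_le_sum (T.erase p) (fun x => x.2) (m' + 1)
            (fun x hx => (hsupp x (hz x (Finset.mem_of_mem_erase hx))).2.2)
          simpa only [nsmul_eq_mul] using h
        have hce : (T.erase p).card = T.card - 1 := Finset.card_erase_of_mem hp
        have hcp : 1 ≤ T.card := Finset.card_pos.2 ⟨p, hp⟩
        have hcast : ((T.erase p).card : ℤ) = (T.card : ℤ) - 1 := by
          rw [hce]; omega
        rw [hcast] at hlb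
        have hq1 : (T.card : ℤ) ≤ (q : ℤ) - 1 := by omega
        have hmono : ((q : ℤ) - 1 - ((T.card : ℤ) - 1)) * (m' + 1) ≤ 0 :=
          mul_nonpos_of_nonneg_of_nonpos (by omega) (by omega)
        unfold Bd
        nlinarith

/-- stability of the coefficient of the partial product. -/
lemma Co_stable {q : ℕ} (hq : nilradical R ^ q = ⊥) (h2 : 2 ≤ q) {n' m' : ℤ}
    (hm' : m' ≤ -1) {c : ℤ × ℤ → R}
    (hsupp : ∀ p, c p ≠ 0 → n' < p.1 ∧ p.1 ≤ 0 ∧ m' < p.2)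
    (hnil : ∀ p, c p ∈ nilradical R) (s w : ℤ) {S : Finset (ℤ × ℤ)}
    (hS : BoxF q n' m' w ⊆ S) : Co c S s w = Co c (BoxF q n' m' w) s w := by
  unfold Co
  refine (Finset.sum_subset (Finset.powerset_mono.2 hS) ?_).symm
  intro T _ hT2
  exact tm_eq_zero hq h2 hm' hsupp hnil (fun h => hT2 (Finset.mem_powerset.2 h))

lemma Co_split (c : ℤ × ℤ → R) (S : Finset (ℤ × ℤ)) (s w : ℤ) (hp : (s, w) ∈ S) :
    Co c S s w = -(c (s, w)) + ∑ T ∈ S.powerset.erase {(s, w)}, tm c s w T := by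
  unfold Co
  rw [← Finset.sum_erase_add _ _ (Finset.mem_powerset.2 (Finset.singleton_subset_iff.2 hp))]
  have h1 : tm c s w {(s, w)} = -(c (s, w)) := by
    unfold tm
    rw [if_pos (by simp)]
    simp
  rw [h1, add_comm]


def nP (q : ℕ) (n : ℤ) : ℤ := ((q : ℤ) - 1) * (n + 1) - 1

def mP (q : ℕ) (m : ℤ) : ℤ := ((q : ℤ) - 1) * (m + 1) - 1

noncomputable def Bx (q : ℕ) (n m w : ℤ) : Finset (ℤ × ℤ) := BoxF q (nP q n) (mP q m) w

lemma nP_le {q : ℕ} {n : ℤ} (h2 : 2 ≤ q) (hn : n ≤ -1) : nP q n ≤ n ∧ nP q n ≤ -1 := by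
  unfold nP
  have hq2 : (2 : ℤ) ≤ (q : ℤ) := by exact_mod_cast h2
  constructor <;> nlinarith

lemma G_mono {n₁ m₁ n₂ m₂ : ℤ} (h1 : n₂ ≤ n₁) (h2 : m₂ ≤ m₁) : G n₁ m₁ ⊆ G n₂ m₂ := by
  intro p hp
  obtain ⟨a, b, c, d⟩ := hp
  exact ⟨by omega, b, by omega, d⟩

lemma G_ne_zero {n' m' : ℤ} {p : ℤ × ℤ} (h : p ∈ G n' m') : ¬(p.1 = 0 ∧ p.2 = 0) := by
  obtain ⟨a, b, c, d⟩ := h; omega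

lemma G_supp {n' m' : ℤ} {p : ℤ × ℤ} (h : p ∈ G n' m') :
    n' < p.1 ∧ p.1 ≤ 0 ∧ m' < p.2 := ⟨h.1, h.2.1, h.2.2.1⟩

lemma mem_Bx_self {q : ℕ} {n m : ℤ} (h2 : 2 ≤ q) (hm : m ≤ -1) {p : ℤ × ℤ}
    (h : p ∈ G (nP q n) (mP q m)) : (p.1, p.2) ∈ Bx q n m p.2 := by
  rw [Bx, mem_BoxF]
  refine ⟨⟨h.1, h.2.1⟩, h.2.2.1, ?_⟩
  unfold Bd mP
  have hca : (2 : ℤ) ≤ (q : ℤ) := by exact_mod_cast h2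
  have h1 : (0 : ℤ) ≤ (q : ℤ) - 1 := by omega
  have hb : ((q : ℤ) - 1) * (m + 1) ≤ 0 := mul_nonpos_of_nonneg_of_nonpos h1 (by omega)
  have hc : ((q : ℤ) - 1) * (((q : ℤ) - 1) * (m + 1)) ≤ 0 :=
    mul_nonpos_of_nonneg_of_nonpos h1 hb
  have heq : ((q : ℤ) - 1) * (((q : ℤ) - 1) * (m + 1) - 1 + 1)
      = ((q : ℤ) - 1) * (((q : ℤ) - 1) * (m + 1)) := by ring
  simp only [heq]
  omega

lemma DD_zero {n m : ℤ} {p : ℤ × ℤ} : ¬ DD n m 0 p := by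
  rintro ⟨M, _, h2, h3, _⟩
  exact h2 (Multiset.card_eq_zero.1 (by omega))

lemma DD_single {n m : ℤ} {p : ℤ × ℤ} (h : p ∈ G n m) : DD n m 1 p :=
  ⟨{p}, by simpa using h, by simp, by simp, by simp⟩

open Classical in
noncomputable def Phi (q : ℕ) (n m : ℤ) (γ : ℤ → ℤ → R) (c : ℤ × ℤ → R) : ℤ × ℤ → R :=
  fun p => if p ∈ G (nP q n) (mP q m) then
    c p + Co c (Bx q n m p.2) p.1 p.2 - γ p.1 p.2 else 0

noncomputable def cstar (q : ℕ) (n m : ℤ) (γ : ℤ → ℤ → R) : ℤ × ℤ → R :=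
  (Phi q n m γ)^[q] 0

lemma tm_mem_nil {c : ℤ × ℤ → R} (hc : ∀ p, c p ∈ nilradical R) {s w : ℤ}
    (h0 : ¬(s = 0 ∧ w = 0)) (T : Finset (ℤ × ℤ)) : tm c s w T ∈ nilradical R := by
  unfold tm
  split
  case isFalse => exact zero_mem _
  case isTrue hcond =>
    rcases Finset.eq_empty_or_nonempty T with hT | ⟨x, hx⟩
    · subst hT
      simp only [Finset.sum_empty] at hcond
      exact absurd ⟨hcond.1.symm, hcond.2.symm⟩ h0
    · rw [← Finset.mul_prod_erase T c hx]
      exact Ideal.mul_mem_left _ _ (Ideal.mul_mem_right _ _ (hc x))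

lemma Co_mem_nil {c : ℤ × ℤ → R} (hc : ∀ p, c p ∈ nilradical R) {s w : ℤ}
    (h0 : ¬(s = 0 ∧ w = 0)) (S : Finset (ℤ × ℤ)) : Co c S s w ∈ nilradical R := by
  unfold Co
  exact Ideal.sum_mem _ fun T _ => tm_mem_nil hc h0 T

lemma Phi_nil {q : ℕ} {n m : ℤ} {γ : ℤ → ℤ → R} (hγnil : ∀ s w, γ s w ∈ nilradical R)
    {c : ℤ × ℤ → R} (hc : ∀ p, c p ∈ nilradical R) (p : ℤ × ℤ) :
    Phi q n m γ c p ∈ nilradical R := by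
  unfold Phi
  split
  case isTrue hreg =>
    exact sub_mem (add_mem (hc p) (Co_mem_nil hc (by have := G_ne_zero hreg; tauto) _))
      (hγnil _ _)
  case isFalse => exact zero_mem _

lemma Phi_fix_eq {q : ℕ} {n m : ℤ} (h2 : 2 ≤ q) (hm : m ≤ -1) {γ : ℤ → ℤ → R}
    {c : ℤ × ℤ → R} {p : ℤ × ℤ} (hreg : p ∈ G (nP q n) (mP q m)) :
    Phi q n m γ c p
      = (∑ T ∈ (Bx q n m p.2).powerset.erase {(p.1, p.2)}, tm c p.1 p.2 T) - γ p.1 p.2 := by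
  unfold Phi
  rw [if_pos hreg, Co_split c _ p.1 p.2 (mem_Bx_self h2 hm hreg)]
  have : c (p.1, p.2) = c p := by rw [Prod.mk.eta]
  rw [this]
  ring

lemma Phi_contract {q : ℕ} {n m : ℤ} (hq : nilradical R ^ q = ⊥) (h2 : 2 ≤ q) (hm : m ≤ -1)
    {γ : ℤ → ℤ → R} (k : ℕ) (c₁ c₂ : ℤ × ℤ → R)
    (hc₁ : ∀ p, c₁ p ∈ nilradical R) (hc₂ : ∀ p, c₂ p ∈ nilradical R)
    (hd : ∀ p, c₁ p - c₂ p ∈ nilradical R ^ k) (p : ℤ × ℤ) :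
    Phi q n m γ c₁ p - Phi q n m γ c₂ p ∈ nilradical R ^ (k + 1) := by
  by_cases hreg : p ∈ G (nP q n) (mP q m)
  · rw [Phi_fix_eq h2 hm hreg, Phi_fix_eq h2 hm hreg]
    have heq : (∑ T ∈ (Bx q n m p.2).powerset.erase {(p.1, p.2)}, tm c₁ p.1 p.2 T)
        - γ p.1 p.2 - ((∑ T ∈ (Bx q n m p.2).powerset.erase {(p.1, p.2)}, tm c₂ p.1 p.2 T)
        - γ p.1 p.2)
        = ∑ T ∈ (Bx q n m p.2).powerset.erase {(p.1, p.2)},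
            (tm c₁ p.1 p.2 T - tm c₂ p.1 p.2 T) := by
      rw [Finset.sum_sub_distrib]; ring
    rw [heq]
    apply Ideal.sum_mem
    intro T hT
    have hTne : T ≠ {(p.1, p.2)} := (Finset.mem_erase.1 hT).1
    unfold tm
    by_cases hcond : (∑ x ∈ T, x.1) = p.1 ∧ (∑ x ∈ T, x.2) = p.2
    · rw [if_pos hcond, if_pos hcond, ← mul_sub]
      have hcard : 2 ≤ T.card := by
        by_contra hcc
        push_neg at hcc
        interval_cases hT2 : T.card
        · have hTe : T = ∅ := Finset.card_eq_zero.1 hT2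
          subst hTe
          simp only [Finset.sum_empty] at hcond
          exact G_ne_zero hreg ⟨hcond.1.symm, hcond.2.symm⟩
        · obtain ⟨x, hx⟩ := Finset.card_eq_one.1 hT2
          subst hx
          simp only [Finset.sum_singleton] at hcond
          exact hTne (by rw [← hcond.1, ← hcond.2])
      exact Ideal.mul_mem_left _ _
        (sub_mem_pow_succ hq T c₁ c₂ (fun x _ => hc₁ x) (fun x _ => hc₂ x)
          (fun x _ => hd x) hcard)
    · rw [if_neg hcond, if_neg hcond, sub_zero]
      exact zero_mem _
  · unfold Phi
    rw [if_neg hreg, if_neg hreg, sub_zero]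
    exact zero_mem _

lemma iter_nil {q : ℕ} {n m : ℤ} {γ : ℤ → ℤ → R} (hγnil : ∀ s w, γ s w ∈ nilradical R)
    (k : ℕ) (p : ℤ × ℤ) : ((Phi q n m γ)^[k] 0) p ∈ nilradical R := by
  induction k generalizing p with
  | zero => exact zero_mem _
  | succ k ih =>
      rw [Function.iterate_succ_apply']
      exact Phi_nil hγnil (fun p' => ih p') p

lemma cstar_supp {q : ℕ} {n m : ℤ} (h2 : 2 ≤ q) {γ : ℤ → ℤ → R} {p : ℤ × ℤ}
    (hp : p ∉ G (nP q n) (mP q m)) : cstar q n m γ p = 0 := by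
  unfold cstar
  have e1 : (Phi q n m γ)^[q] (0 : ℤ × ℤ → R) = Phi q n m γ ((Phi q n m γ)^[q - 1] 0) := by
    have h := Function.iterate_succ_apply' (Phi q n m γ) (q - 1) (0 : ℤ × ℤ → R)
    rwa [show (q - 1).succ = q from by omega] at h
  rw [e1]
  unfold Phi
  rw [if_neg hp]

lemma cstar_nil {q : ℕ} {n m : ℤ} {γ : ℤ → ℤ → R} (hγnil : ∀ s w, γ s w ∈ nilradical R)
    (p : ℤ × ℤ) : cstar q n m γ p ∈ nilradical R := iter_nil hγnil q p

lemma cstar_fix {q : ℕ} {n m : ℤ} (hq : nilradical R ^ q = ⊥) (h2 : 2 ≤ q) (hm : m ≤ -1)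
    {γ : ℤ → ℤ → R} (hγnil : ∀ s w, γ s w ∈ nilradical R) :
    Phi q n m γ (cstar q n m γ) = cstar q n m γ := by
  have hstep : ∀ k : ℕ, ∀ p, ((Phi q n m γ)^[k + 1] 0) p - ((Phi q n m γ)^[k] 0) p
      ∈ nilradical R ^ (k + 1) := by
    intro k
    induction k with
    | zero =>
        intro p
        simp only [zero_add, Function.iterate_one, Function.iterate_zero, id_eq,
          Pi.zero_apply, sub_zero, pow_one]
        exact Phi_nil hγnil (fun _ => zero_mem _) p
    | succ k ih =>
        intro p
        have e1 : (Phi q n m γ)^[k + 1 + 1] (0 : ℤ × ℤ → R)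
            = Phi q n m γ ((Phi q n m γ)^[k + 1] 0) := Function.iterate_succ_apply' _ _ _
        have e2 : (Phi q n m γ)^[k + 1] (0 : ℤ × ℤ → R)
            = Phi q n m γ ((Phi q n m γ)^[k] 0) := Function.iterate_succ_apply' _ _ _
        rw [e2] at ih
        rw [e1, e2]
        exact Phi_contract hq h2 hm (k + 1) _ _
          (fun p' => Phi_nil hγnil (fun x => iter_nil hγnil k x) p')
          (fun p' => iter_nil hγnil k p') ih p
  funext p
  have h := hstep q p
  have hle : nilradical R ^ (q + 1) ≤ nilradical R ^ q := Ideal.pow_le_pow_right (by omega)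
  have h0 := hle h
  rw [hq, Ideal.mem_bot, sub_eq_zero] at h0
  calc Phi q n m γ (cstar q n m γ) p = ((Phi q n m γ)^[q + 1] 0) p := by
        rw [Function.iterate_succ_apply']
        rfl
    _ = cstar q n m γ p := h0

lemma cstar_eq {q : ℕ} {n m : ℤ} (hq : nilradical R ^ q = ⊥) (h2 : 2 ≤ q) (hm : m ≤ -1)
    {γ : ℤ → ℤ → R} (hγnil : ∀ s w, γ s w ∈ nilradical R) {p : ℤ × ℤ}
    (hreg : p ∈ G (nP q n) (mP q m)) :
    cstar q n m γ p
      = (∑ T ∈ (Bx q n m p.2).powerset.erase {(p.1, p.2)}, tm (cstar q n m γ) p.1 p.2 T)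
        - γ p.1 p.2 := by
  conv_lhs => rw [← cstar_fix hq h2 hm hγnil]
  exact Phi_fix_eq h2 hm hreg


lemma mP_eq_nP (q : ℕ) (m : ℤ) : mP q m = nP q m := rfl

lemma cstar_filt {q : ℕ} {n m : ℤ} (hq : nilradical R ^ q = ⊥) (h2 : 2 ≤ q)
    (hn : n ≤ -1) (hm : m ≤ -1) {γ : ℤ → ℤ → R} (hγnil : ∀ s w, γ s w ∈ nilradical R)
    (hγG : ∀ s w, γ s w ≠ 0 → (s, w) ∈ G n m) :
    ∀ k : ℕ, ∀ p : ℤ × ℤ, ¬ DD n m k p → cstar q n m γ p ∈ nilradical R ^ (k + 1) := by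
  intro k
  induction k using Nat.strong_induction_on with
  | _ k IH =>
    intro p hp
    rcases k with _ | k
    · rw [zero_add, pow_one]
      exact cstar_nil hγnil p
    by_cases hreg : p ∈ G (nP q n) (mP q m)
    swap
    · rw [cstar_supp h2 hreg]; exact zero_mem _
    have hfix := cstar_eq hq h2 hm hγnil hreg
    have hγ0 : γ p.1 p.2 = 0 := by
      by_contra hne
      refine hp (DD.mono (by omega) (DD_single ?_))
      have := hγG p.1 p.2 hne
      simpa using this
    rw [hfix, hγ0, sub_zero]
    apply Ideal.sum_mem
    intro T hT
    have hTne : T ≠ {(p.1, p.2)} := (Finset.mem_erase.1 hT).1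
    unfold tm
    by_cases hcond : (∑ x ∈ T, x.1) = p.1 ∧ (∑ x ∈ T, x.2) = p.2
    swap
    · rw [if_neg hcond]; exact zero_mem _
    rw [if_pos hcond]
    · by_cases hz : ∃ x ∈ T, cstar q n m γ x = 0
      · obtain ⟨x, hx, hcx⟩ := hz
        rw [Finset.prod_eq_zero hx hcx, mul_zero]
        exact zero_mem _
      push_neg at hz
      have hTne' : T.Nonempty := by
        rcases Finset.eq_empty_or_nonempty T with h | h
        · subst h
          simp only [Finset.sum_empty] at hcond
          exact absurd ⟨hcond.1.symm, hcond.2.symm⟩ (G_ne_zero hreg)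
        · exact h
      have hcard2 : 2 ≤ T.card := by
        by_contra hcc
        push_neg at hcc
        interval_cases hT2 : T.card
        · exact absurd (Finset.card_eq_zero.1 hT2) (Finset.nonempty_iff_ne_empty.1 hTne')
        · obtain ⟨x, hx⟩ := Finset.card_eq_one.1 hT2
          subst hx
          simp only [Finset.sum_singleton] at hcond
          exact hTne (by rw [← hcond.1, ← hcond.2])
      by_cases hA : ∀ x ∈ T, ∃ j : ℕ, j ≤ k ∧ DD n m j x
      · classical
        set d : ℤ × ℤ → ℕ := fun x => if h : ∃ j : ℕ, DD n m j x then Nat.find h else 0 with hd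
        have hdx : ∀ x ∈ T, DD n m (d x) x := by
          intro x hx
          obtain ⟨j, _, hj2⟩ := hA x hx
          have he : ∃ j : ℕ, DD n m j x := ⟨j, hj2⟩
          simp only [hd, dif_pos he]
          exact Nat.find_spec he
        have hdle : ∀ x ∈ T, d x ≤ k := by
          intro x hx
          obtain ⟨j, hj1, hj2⟩ := hA x hx
          have he : ∃ j : ℕ, DD n m j x := ⟨j, hj2⟩
          simp only [hd, dif_pos he]
          exact le_trans (Nat.find_min' he hj2) hj1
        have hdmin : ∀ x ∈ T, ∀ j < d x, ¬ DD n m j x := by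
          intro x hx j hj
          obtain ⟨j', _, hj2⟩ := hA x hx
          have he : ∃ j : ℕ, DD n m j x := ⟨j', hj2⟩
          simp only [hd, dif_pos he] at hj
          exact Nat.find_min he hj
        have hd1 : ∀ x ∈ T, 1 ≤ d x := by
          intro x hx
          rcases Nat.eq_zero_or_pos (d x) with h0 | h
          · exact absurd (h0 ▸ hdx x hx) DD_zero
          · exact h
        have hmem : ∀ x ∈ T, cstar q n m γ x ∈ nilradical R ^ d x := by
          intro x hx
          have h1 := hd1 x hx
          have h := IH (d x - 1) (by have := hdle x hx; omega) x
            (hdmin x hx (d x - 1) (by omega))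
          rwa [show d x - 1 + 1 = d x from by omega] at h
        have hsum : DD n m (∑ x ∈ T, d x) (∑ x ∈ T, x) := finset_sum_DD T hTne' d hdx
        have hsum_eq : (∑ x ∈ T, x) = (p.1, p.2) := by
          apply Prod.ext
          · rw [Prod.fst_sum]; exact hcond.1
          · rw [Prod.snd_sum]; exact hcond.2
        have hks : k + 1 + 2 ≤ (∑ x ∈ T, d x) + 1 := by
          by_contra hlt
          push_neg at hlt
          apply hp
          rw [hsum_eq] at hsum
          have : DD n m (∑ x ∈ T, d x) p := by simpa using hsum
          exact this.mono (by omega)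
        have hprod := prod_mem_pow_sum (nilradical R) T _ d hmem
        have hle : nilradical R ^ (∑ x ∈ T, d x) ≤ nilradical R ^ (k + 1 + 1) :=
          Ideal.pow_le_pow_right (by omega)
        exact Ideal.mul_mem_left _ _ (hle hprod)
      · push_neg at hA
        obtain ⟨x₀, hx₀T, hx₀⟩ := hA
        have h1 : cstar q n m γ x₀ ∈ nilradical R ^ (k + 1) :=
          IH k (by omega) x₀ (hx₀ k le_rfl)
        rw [← Finset.mul_prod_erase T _ hx₀T]
        have h2' : ∏ x ∈ T.erase x₀, cstar q n m γ x ∈ nilradical R := by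
          obtain ⟨y, hy⟩ : (T.erase x₀).Nonempty := by
            rw [← Finset.card_pos, Finset.card_erase_of_mem hx₀T]; omega
          rw [← Finset.mul_prod_erase _ _ hy]
          exact Ideal.mul_mem_right _ _ (cstar_nil hγnil y)
        have h3 := Ideal.mul_mem_mul h1 h2'
        rw [← pow_succ] at h3
        exact Ideal.mul_mem_left _ _ h3

lemma tm_support {q : ℕ} {n m : ℤ} (hq : nilradical R ^ q = ⊥) (h2 : 2 ≤ q)
    (hn : n ≤ -1) (hm : m ≤ -1) {γ : ℤ → ℤ → R} (hγnil : ∀ s w, γ s w ∈ nilradical R)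
    (hγG : ∀ s w, γ s w ≠ 0 → (s, w) ∈ G n m) (s w : ℤ) (T : Finset (ℤ × ℤ))
    (hT : T.Nonempty) (h : tm (cstar q n m γ) s w T ≠ 0) :
    ∃ j : ℕ, 1 ≤ j ∧ j ≤ q - 1 ∧ DD n m j (s, w) := by
  unfold tm at h
  split at h
  case isFalse => exact absurd rfl h
  case isTrue hcond =>
    have hz : ∀ x ∈ T, cstar q n m γ x ≠ 0 := by
      intro x hx hx0
      exact h (by rw [Finset.prod_eq_zero hx hx0, mul_zero])
    classical
    have hex : ∀ x ∈ T, ∃ j : ℕ, DD n m j x := by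
      intro x hx
      by_contra hno
      push_neg at hno
      apply hz x hx
      have h1 := cstar_filt hq h2 hn hm hγnil hγG (q - 1) x (hno (q - 1))
      rw [show q - 1 + 1 = q from by omega, hq, Ideal.mem_bot] at h1
      exact h1
    set d : ℤ × ℤ → ℕ := fun x => if h : ∃ j : ℕ, DD n m j x then Nat.find h else 0 with hd
    have hdx : ∀ x ∈ T, DD n m (d x) x := by
      intro x hx
      have he := hex x hx
      simp only [hd, dif_pos he]
      exact Nat.find_spec he
    have hd1 : ∀ x ∈ T, 1 ≤ d x := by
      intro x hx
      rcases Nat.eq_zero_or_pos (d x) with h0 | hpos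
      · exact absurd (h0 ▸ hdx x hx) DD_zero
      · exact hpos
    have hmem : ∀ x ∈ T, cstar q n m γ x ∈ nilradical R ^ d x := by
      intro x hx
      have h1 := hd1 x hx
      have he := hex x hx
      have hmin : ¬ DD n m (d x - 1) x := by
        have : d x - 1 < d x := by omega
        simp only [hd, dif_pos he] at this ⊢
        exact Nat.find_min he this
      have hr := cstar_filt hq h2 hn hm hγnil hγG (d x - 1) x hmin
      rwa [show d x - 1 + 1 = d x from by omega] at hr
    have hsum : DD n m (∑ x ∈ T, d x) (∑ x ∈ T, x) := finset_sum_DD T hT d hdx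
    have hsum_eq : (∑ x ∈ T, x) = (s, w) := by
      apply Prod.ext
      · rw [Prod.fst_sum]; exact hcond.1
      · rw [Prod.snd_sum]; exact hcond.2
    rw [hsum_eq] at hsum
    have hle : (∑ x ∈ T, d x) ≤ q - 1 := by
      by_contra hgt
      push_neg at hgt
      apply h
      have hprod := prod_mem_pow_sum (nilradical R) T _ d hmem
      have hle2 : nilradical R ^ (∑ x ∈ T, d x) ≤ nilradical R ^ q :=
        Ideal.pow_le_pow_right (by omega)
      have := hle2 hprod
      rw [hq, Ideal.mem_bot] at this
      rw [this, mul_zero]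
    obtain ⟨y, hy⟩ := hT
    refine ⟨∑ x ∈ T, d x, ?_, hle, hsum⟩
    calc 1 ≤ d y := hd1 y hy
      _ ≤ ∑ x ∈ T, d x := Finset.single_le_sum (fun i _ => Nat.zero_le _) hy

lemma cstar_supp_bounds {q : ℕ} {n m : ℤ} (h2 : 2 ≤ q) {γ : ℤ → ℤ → R} :
    ∀ p : ℤ × ℤ, cstar q n m γ p ≠ 0 → nP q n < p.1 ∧ p.1 ≤ 0 ∧ mP q m < p.2 := by
  intro p hp
  have hmem : p ∈ G (nP q n) (mP q m) := by
    by_contra h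
    exact hp (cstar_supp h2 h)
  exact G_supp hmem

lemma mem_Bx_pair {q : ℕ} {n m : ℤ} (h2 : 2 ≤ q) (hm : m ≤ -1) {s w : ℤ}
    (h : ((s, w) : ℤ × ℤ) ∈ G (nP q n) (mP q m)) : ((s, w) : ℤ × ℤ) ∈ Bx q n m w := by
  have h3 := mem_Bx_self (p := ((s, w) : ℤ × ℤ)) h2 hm h
  dsimp only at h3
  exact h3

/-- the master coefficient identity, on boxes. -/
lemma Co_eq {q : ℕ} {n m : ℤ} (hq : nilradical R ^ q = ⊥) (h2 : 2 ≤ q)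
    (hn : n ≤ -1) (hm : m ≤ -1) {γ : ℤ → ℤ → R} (hγnil : ∀ s w, γ s w ∈ nilradical R)
    (hγG : ∀ s w, γ s w ≠ 0 → (s, w) ∈ G n m) (s w : ℤ) {S : Finset (ℤ × ℤ)}
    (hS : Bx q n m w ⊆ S) :
    Co (cstar q n m γ) S s w = γ s w + (if s = 0 ∧ w = 0 then 1 else 0) := by
  have hmP : mP q m ≤ -1 := by rw [mP_eq_nP]; exact (nP_le h2 hm).2
  unfold Bx at hS
  rw [Co_stable hq h2 hmP (cstar_supp_bounds h2) (fun p => cstar_nil hγnil p) s w hS]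
  by_cases hreg : (s, w) ∈ G (nP q n) (mP q m)
  · have h := cstar_eq (p := (s, w)) hq h2 hm hγnil hreg
    dsimp only at h
    have hp := mem_Bx_self (p := (s, w)) h2 hm hreg
    dsimp only at hp
    have hbx : BoxF q (nP q n) (mP q m) w = Bx q n m w := rfl
    have hif : (if s = 0 ∧ w = 0 then (1 : R) else 0) = 0 :=
      if_neg (fun hc => G_ne_zero hreg ⟨hc.1, hc.2⟩)
    rw [hbx, Co_split _ _ s w hp, h, hif]
    ring
  · have hγ0 : γ s w = 0 := by
      by_contra hne
      exact hreg (G_mono (nP_le h2 hn).1 (by rw [mP_eq_nP]; exact (nP_le h2 hm).1) (hγG s w hne))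
    have hsplit : Co (cstar q n m γ) (BoxF q (nP q n) (mP q m) w) s w
        = tm (cstar q n m γ) s w ∅
          + ∑ T ∈ (BoxF q (nP q n) (mP q m) w).powerset.erase ∅, tm (cstar q n m γ) s w T := by
      unfold Co
      rw [← Finset.sum_erase_add _ _ (Finset.empty_mem_powerset _), add_comm]
    rw [hsplit]
    have hrest : ∀ T ∈ (BoxF q (nP q n) (mP q m) w).powerset.erase ∅,
        tm (cstar q n m γ) s w T = 0 := by
      intro T hT
      by_contra hne
      have hTne : T.Nonempty :=
        Finset.nonempty_iff_ne_empty.2 (Finset.mem_erase.1 hT).1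
      obtain ⟨j, hj1, hj2, hj3⟩ := tm_support hq h2 hn hm hγnil hγG s w T hTne hne
      have hmemG := hj3.mem_G hn hm
      have hjq : (j : ℤ) ≤ (q : ℤ) - 1 := by omega
      have hb1 : nP q n ≤ (j : ℤ) * (n + 1) - 1 := by
        unfold nP; nlinarith
      have hb2 : mP q m ≤ (j : ℤ) * (m + 1) - 1 := by
        unfold mP; nlinarith
      exact hreg (G_mono hb1 hb2 hmemG)
    rw [Finset.sum_eq_zero hrest, add_zero, hγ0, zero_add]
    unfold tm
    simp only [Finset.sum_empty, Finset.card_empty, pow_zero, Finset.prod_empty, mul_one]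
    by_cases hc : s = 0 ∧ w = 0
    · rw [if_pos ⟨hc.1.symm, hc.2.symm⟩, if_pos hc]
    · rw [if_neg (fun hh => hc ⟨hh.1.symm, hh.2.symm⟩), if_neg hc]

/-- the master coefficient identity, for very negative or positive `t`-degrees. -/
lemma Co_eq_low {q : ℕ} {n m : ℤ} (hq : nilradical R ^ q = ⊥) (h2 : 2 ≤ q)
    (hn : n ≤ -1) (hm : m ≤ -1) {γ : ℤ → ℤ → R} (hγnil : ∀ s w, γ s w ∈ nilradical R)
    (hγG : ∀ s w, γ s w ≠ 0 → (s, w) ∈ G n m) (s w : ℤ)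
    (hs : s ≤ nP q n ∨ 0 < s) (S : Finset (ℤ × ℤ)) :
    Co (cstar q n m γ) S s w = γ s w + (if s = 0 ∧ w = 0 then 1 else 0) := by
  have hnPn : nP q n ≤ n ∧ nP q n ≤ -1 := nP_le h2 hn
  have hγ0 : γ s w = 0 := by
    by_contra hne
    have hmem := hγG s w hne
    have := hmem.1
    have := hmem.2.1
    simp only at this
    omega
  have hs0 : ¬(s = 0 ∧ w = 0) := by omega
  rw [hγ0, if_neg hs0, add_zero]
  unfold Co
  apply Finset.sum_eq_zero
  intro T hT
  by_contra hne
  rcases Finset.eq_empty_or_nonempty T with hTe | hTne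
  · subst hTe
    unfold tm at hne
    simp only [Finset.sum_empty] at hne
    exact hne (if_neg (fun hh : (0 : ℤ) = s ∧ (0 : ℤ) = w => hs0 ⟨hh.1.symm, hh.2.symm⟩))
  · obtain ⟨j, hj1, hj2, hj3⟩ := tm_support hq h2 hn hm hγnil hγG s w T hTne hne
    have hmemG := hj3.mem_G hn hm
    have hf1 := hmemG.1
    have hf2 := hmemG.2.1
    simp only at hf1 hf2
    have hjq : (j : ℤ) ≤ (q : ℤ) - 1 := by omega
    have hb1 : nP q n ≤ (j : ℤ) * (n + 1) - 1 := by unfold nP; nlinarith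
    omega


set_option maxHeartbeats 800000 in
/-- **Unique infinite product decomposition in `ℙ(R)` (formula (dd2)).**
Let `R` be a commutative ring whose nilradical is nilpotent.  Every `g ∈ ℙ(R)` decomposes
uniquely as the convergent infinite product
`g = ∏_{(i,j) ≤ (0,−1), i > n, j > m} (1 − c_{i,j} uʲ tⁱ)` with all `c_{i,j} ∈ N(R)`,
for appropriate bounds `n < 0` and `m`; convergence is in the topology of `R((u))((t))`
(for every basic neighborhood `W_{M,{Mᵢ}}` of `0`, all sufficiently large finite partial
products differ from `g` by an element of `W_{M,{Mᵢ}}`). -/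
theorem pGroup_unique_product_decomposition
    (hN : ∃ q : ℕ, nilradical R ^ q = ⊥)
    (g : LaurentSeries (LaurentSeries R)) (hg : InPGroup g) :
    ∃! c : ℤ × ℤ → R,
      (∀ p : ℤ × ℤ, c p ≠ 0 → (p.1 < 0 ∨ (p.1 = 0 ∧ p.2 ≤ -1))) ∧
      (∃ n m : ℤ, n < 0 ∧ ∀ p : ℤ × ℤ, c p ≠ 0 → n < p.1 ∧ m < p.2) ∧
      (∀ p : ℤ × ℤ, IsNilpotent (c p)) ∧
      (∀ (M : ℤ) (Mi : ℤ → ℤ), ∃ S₀ : Finset (ℤ × ℤ), ∀ S : Finset (ℤ × ℤ), S₀ ⊆ S →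
        MemW M Mi
          ((∏ p ∈ S,
              ((1 : LaurentSeries (LaurentSeries R)) -
                HahnSeries.single p.1 (HahnSeries.single p.2 (c p)))) - g)) := by
  classical
  obtain ⟨q₀, hq₀⟩ := hN
  set q := max q₀ 2 with hqdef
  have hq : nilradical R ^ q = ⊥ := by
    have hle : nilradical R ^ q ≤ nilradical R ^ q₀ :=
      Ideal.pow_le_pow_right (le_max_left _ _)
    rw [hq₀] at hle
    exact le_bot_iff.1 hle
  have h2 : 2 ≤ q := le_max_right _ _
  set γ : ℤ → ℤ → R := fun s w => ((g - 1).coeff s).coeff w with hγdef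
  -- lower bound in t
  obtain ⟨n, hn, hnbd⟩ : ∃ n : ℤ, n ≤ -1 ∧ ∀ s ≤ n, (g - 1).coeff s = 0 := by
    refine ⟨min ((g - 1).order) 0 - 1, ?_, ?_⟩
    · have := min_le_right ((g - 1).order) 0; omega
    · intro s hs
      by_cases h0 : g - 1 = 0
      · rw [h0]; simp
      · apply HahnSeries.coeff_eq_zero_of_lt_order
        have := min_le_left ((g - 1).order) 0; omega
  -- lower bound in u
  obtain ⟨m, hm, hmbd⟩ : ∃ m : ℤ, m ≤ -1 ∧ ∀ s w : ℤ, w ≤ m → γ s w = 0 := by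
    have hne : (Finset.Ioc n 0).Nonempty := ⟨0, by rw [Finset.mem_Ioc]; omega⟩
    refine ⟨(Finset.Ioc n 0).inf' hne (fun s => min (((g - 1).coeff s).order) 0) - 1, ?_, ?_⟩
    · have h0 : (0 : ℤ) ∈ Finset.Ioc n 0 := by rw [Finset.mem_Ioc]; omega
      have := Finset.inf'_le (fun s => min (((g - 1).coeff s).order) 0) h0
      have := min_le_right (((g - 1).coeff 0).order) 0
      omega
    · intro s w hw
      by_cases hsmem : s ∈ Finset.Ioc n 0
      · by_cases h0 : (g - 1).coeff s = 0
        · show ((g - 1).coeff s).coeff w = 0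
          rw [h0]; simp
        · show ((g - 1).coeff s).coeff w = 0
          apply HahnSeries.coeff_eq_zero_of_lt_order
          have h1 := Finset.inf'_le (fun s => min (((g - 1).coeff s).order) 0) hsmem
          have h2 := min_le_left (((g - 1).coeff s).order) 0
          omega
      · rw [Finset.mem_Ioc] at hsmem
        push_neg at hsmem
        show ((g - 1).coeff s).coeff w = 0
        rcases le_or_gt s n with hsn | hsn
        · rw [hnbd s hsn]; simp
        · rw [hg.1 s (hsmem hsn)]; simp
  have hγnil : ∀ s w : ℤ, γ s w ∈ nilradical R := fun s w => mem_nilradical.2 (hg.2.2 s w)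
  have hγG : ∀ s w : ℤ, γ s w ≠ 0 → (s, w) ∈ G n m := by
    intro s w h
    have h1 : n < s := by
      by_contra hc; push_neg at hc
      exact h (by show ((g - 1).coeff s).coeff w = 0; rw [hnbd s hc]; simp)
    have h2' : s ≤ 0 := by
      by_contra hc; push_neg at hc
      exact h (by show ((g - 1).coeff s).coeff w = 0; rw [hg.1 s hc]; simp)
    have h3 : m < w := by
      by_contra hc; push_neg at hc
      exact h (hmbd s w hc)
    have h4 : s < 0 ∨ (s = 0 ∧ w ≤ -1) := by
      rcases lt_or_eq_of_le h2' with hlt | heq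
      · exact Or.inl hlt
      · refine Or.inr ⟨heq, ?_⟩
        by_contra hc; push_neg at hc
        exact h (by rw [heq] at *; exact hg.2.1 w (by omega))
    exact ⟨h1, h2', h3, h4⟩
  -- the relation between γ and the coefficients of g
  have hrel : ∀ s w : ℤ, (g.coeff s).coeff w = γ s w + (if s = 0 ∧ w = 0 then 1 else 0) := by
    intro s w
    simp only [hγdef]
    have hco : g.coeff s = (g - 1).coeff s + (1 : LaurentSeries (LaurentSeries R)).coeff s := by
      rw [← HahnSeries.coeff_add, sub_add_cancel]
    rw [hco, HahnSeries.coeff_add, HahnSeries.coeff_one]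
    by_cases hs : s = 0
    · subst hs
      rw [if_pos rfl, HahnSeries.coeff_one]
      by_cases hw : w = 0
      · subst hw; norm_num
      · simp [hw]
    · rw [if_neg hs, if_neg (fun hc : s = 0 ∧ w = 0 => hs hc.1), HahnSeries.coeff_zero]
  set c₀ : ℤ × ℤ → R := cstar q n m γ with hc₀def
  have hmemG₀ : ∀ p : ℤ × ℤ, c₀ p ≠ 0 → p ∈ G (nP q n) (mP q m) := by
    intro p hp
    by_contra h
    exact hp (cstar_supp h2 h)
  refine ⟨c₀, ⟨?_, ?_, ?_, ?_⟩, ?_⟩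
  · exact fun p hp => (hmemG₀ p hp).2.2.2
  · refine ⟨nP q n, mP q m, by have := (nP_le h2 hn).2; omega, fun p hp => ?_⟩
    have := hmemG₀ p hp
    exact ⟨this.1, this.2.2.1⟩
  · exact fun p => mem_nilradical.1 (cstar_nil hγnil p)
  · -- convergence
    intro M Mi
    set B := (insert (mP q m)
      ((Finset.Ioo (nP q n) M).image fun s => Bd q (mP q m) (Mi s - 1))).max'
      (Finset.insert_nonempty _ _) with hBdef
    refine ⟨Finset.Ioc (nP q n) 0 ×ˢ Finset.Ioc (mP q m) B, ?_⟩
    intro S hS s hsM w hw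
    rw [HahnSeries.coeff_sub, HahnSeries.coeff_sub, coeff_prod, hrel s w, sub_eq_zero]
    by_cases hcase : nP q n < s
    · apply Co_eq hq h2 hn hm hγnil hγG s w
      refine subset_trans ?_ hS
      unfold Bx BoxF
      apply Finset.product_subset_product (Finset.Subset.refl _)
      apply Finset.Ioc_subset_Ioc_right
      have hb1 : Bd q (mP q m) w ≤ Bd q (mP q m) (Mi s - 1) := by
        unfold Bd; omega
      have hb2 : Bd q (mP q m) (Mi s - 1) ≤ B := by
        apply Finset.le_max'
        exact Finset.mem_insert_of_mem
          (Finset.mem_image_of_mem _ (Finset.mem_Ioo.2 ⟨hcase, hsM⟩))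
      omega
    · push_neg at hcase
      exact Co_eq_low hq h2 hn hm hγnil hγG s w (Or.inl hcase) S
  · -- uniqueness
    rintro c ⟨hlex, ⟨nc, mc, hnc0, hbd⟩, hnil, hconv⟩
    set mc' := min mc (-1 : ℤ) with hmc'def
    have hmc' : mc' ≤ -1 := min_le_right _ _
    have hsupp_c : ∀ p : ℤ × ℤ, c p ≠ 0 → nc < p.1 ∧ p.1 ≤ 0 ∧ mc' < p.2 := by
      intro p hp
      have h1 := hbd p hp
      have h2' := hlex p hp
      have := min_le_left mc (-1 : ℤ)
      exact ⟨h1.1, by omega, by omega⟩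
    have hnil' : ∀ p, c p ∈ nilradical R := fun p => mem_nilradical.2 (hnil p)
    have hEc : ∀ s w : ℤ, ∀ S : Finset (ℤ × ℤ), BoxF q nc mc' w ⊆ S →
        Co c S s w = γ s w + (if s = 0 ∧ w = 0 then 1 else 0) := by
      intro s w S hBS
      obtain ⟨S₀, hS₀⟩ := hconv (s + 1) (fun _ => w + 1)
      have hmw := hS₀ (S₀ ∪ S) Finset.subset_union_left
      have h1 : Co c (S₀ ∪ S) s w = (g.coeff s).coeff w := by
        have hz := hmw s (lt_add_one s) w (lt_add_one w)
        rw [HahnSeries.coeff_sub, HahnSeries.coeff_sub, coeff_prod] at hz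
        exact sub_eq_zero.mp hz
      have hstab1 := Co_stable hq h2 hmc' hsupp_c hnil' s w
        (S := S₀ ∪ S) (subset_trans hBS Finset.subset_union_right)
      have hstab2 := Co_stable hq h2 hmc' hsupp_c hnil' s w (S := S) hBS
      rw [hstab2, ← hstab1, h1, hrel s w]
    have hEc₀ : ∀ s w : ℤ, ∀ S : Finset (ℤ × ℤ), Bx q n m w ⊆ S →
        Co c₀ S s w = γ s w + (if s = 0 ∧ w = 0 then 1 else 0) :=
      fun s w S hBS => Co_eq hq h2 hn hm hγnil hγG s w hBS
    have key : ∀ k : ℕ, ∀ p : ℤ × ℤ, c p - c₀ p ∈ nilradical R ^ k := by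
      intro k
      induction k with
      | zero =>
          intro p
          rw [pow_zero, Ideal.one_eq_top]
          exact Submodule.mem_top
      | succ k ih =>
          rintro ⟨s, w⟩
          set S := BoxF q nc mc' w ∪ Bx q n m w with hSdef
          by_cases hmemS : ((s, w) : ℤ × ℤ) ∈ S
          · have e1 := hEc s w S Finset.subset_union_left
            have e2 := hEc₀ s w S Finset.subset_union_right
            have e3 : Co c S s w = Co c₀ S s w := by rw [e1, e2]
            rw [Co_split c S s w hmemS, Co_split c₀ S s w hmemS] at e3
            have e4 : c (s, w) - c₀ (s, w)
                = ∑ T ∈ S.powerset.erase {(s, w)}, (tm c s w T - tm c₀ s w T) := by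
              rw [Finset.sum_sub_distrib]
              linear_combination -e3
            rw [e4]
            apply Ideal.sum_mem
            intro T hT
            have hTne := (Finset.mem_erase.1 hT).1
            unfold tm
            by_cases hcond : (∑ x ∈ T, x.1) = s ∧ (∑ x ∈ T, x.2) = w
            swap
            · rw [if_neg hcond, if_neg hcond, sub_self]
              exact zero_mem _
            rw [if_pos hcond, if_pos hcond]
            rcases Finset.eq_empty_or_nonempty T with hTe | hTne'
            · subst hTe
              simp only [Finset.prod_empty, Finset.card_empty, pow_zero, mul_one, sub_self]
              exact zero_mem _
            by_cases hT1 : T.card = 1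
            · exfalso
              obtain ⟨x, hx⟩ := Finset.card_eq_one.1 hT1
              apply hTne
              subst hx
              simp only [Finset.sum_singleton] at hcond
              rw [← hcond.1, ← hcond.2]
            · have hcard : 2 ≤ T.card := by
                have h0 := Finset.card_pos.2 hTne'
                omega
              rw [← mul_sub]
              exact Ideal.mul_mem_left _ _
                (sub_mem_pow_succ hq T c c₀ (fun x _ => hnil' x)
                  (fun x _ => cstar_nil hγnil x) (fun x _ => ih x) hcard)
          · have hc0 : c (s, w) = 0 := by
              by_contra h
              have hb := hsupp_c _ h
              apply hmemS
              rw [hSdef]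
              apply Finset.mem_union_left
              rw [mem_BoxF]
              refine ⟨⟨hb.1, hb.2.1⟩, hb.2.2, ?_⟩
              show w ≤ Bd q mc' w
              unfold Bd
              have hqc : (2 : ℤ) ≤ (q : ℤ) := by exact_mod_cast h2
              have := mul_nonpos_of_nonneg_of_nonpos
                (by omega : (0 : ℤ) ≤ (q : ℤ) - 1) (by omega : mc' + 1 ≤ 0)
              omega
            have hc0' : c₀ (s, w) = 0 := by
              by_contra h
              have hb := hmemG₀ _ h
              apply hmemS
              rw [hSdef]
              exact Finset.mem_union_right _ (mem_Bx_pair h2 hm hb)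
            rw [hc0, hc0', sub_self]
            exact zero_mem _
    funext p
    have hk := key q p
    rw [hq, Ideal.mem_bot, sub_eq_zero] at hk
    exact hk

end CC
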